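/- Let s ∈ (0,1) and v ∈ W^{1,∞}(ℝ²) with supp(v) ⊂ B₁(0). Then there exists a constant C > 0 depending only on s and ‖v‖_{W^{1,∞}} such that |D_y^s v(x,y)| ≤ C min{1, (x²+y²)^{-(1+2s)/4}} for all (x,y) ∈ ℝ², where |D_y^s v(x,y)|² = (C(s)/2) ∫_ℝ |v(x,y)-v(x,z)|²/|y-z|^{1+2s} dz. -/

import Mathlib

open MeasureTheory
open scoped ENNReal NNReal

/-- The squared fractional gradient in the `y`-variable,
`|D_y^s w(x,y)|² = (C(s)/2) ∫ |w(x,y)-w(x,z)|²/|y-z|^{1+2s} dz`, with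
`C(s) = (∫ (1-cos ζ)/|ζ|^{1+2s} dζ)⁻¹`, valued in `ℝ≥0∞`. -/
noncomputable def fracGradSq (s : ℝ) (w : ℝ × ℝ → ℝ) (p : ℝ × ℝ) : ENNReal :=
  ENNReal.ofReal ((∫ ζ : ℝ, (1 - Real.cos ζ) / |ζ| ^ (1 + 2 * s))⁻¹ / 2) *
    ∫⁻ z : ℝ, ENNReal.ofReal ((w p - w (p.1, z)) ^ 2 / |p.2 - z| ^ (1 + 2 * s))

lemma integrableOn_abs_rpow_Icc {r : ℝ} (hr : -1 < r) :
    IntegrableOn (fun t : ℝ => |t| ^ r) (Set.Icc (-1) 1) := by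
  have h01 : IntegrableOn (fun t : ℝ => |t| ^ r) (Set.Icc 0 1) := by
    rw [integrableOn_Icc_iff_integrableOn_Ioc]
    have h := (intervalIntegral.intervalIntegrable_rpow' (a := (0:ℝ)) (b := 1) hr)
    rw [intervalIntegrable_iff, Set.uIoc_of_le (zero_le_one)] at h
    exact h.congr_fun (fun t ht => by rw [abs_of_pos ht.1]) measurableSet_Ioc
  have hneg : IntegrableOn (fun t : ℝ => |t| ^ r) (Set.Icc (-1) 0) := by
    have key := (Measure.measurePreserving_neg (volume : Measure ℝ)).integrableOn_comp_preimage
        (Homeomorph.neg ℝ).measurableEmbedding (f := fun t : ℝ => |t| ^ r)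
        (s := Set.Icc (-1) (0:ℝ))
    apply key.mp
    have hc : ((fun t : ℝ => |t| ^ r) ∘ Neg.neg) = fun t : ℝ => |t| ^ r := by
      funext t; simp [Function.comp, abs_neg]
    have hp : (Neg.neg ⁻¹' Set.Icc (-1:ℝ) 0 : Set ℝ) = Set.Icc 0 1 := by
      ext t
      simp only [Set.mem_preimage, Set.mem_Icc]
      constructor
      · rintro ⟨a, b⟩; constructor <;> linarith
      · rintro ⟨a, b⟩; constructor <;> linarith
    rw [hc, hp]
    exact h01
  exact (hneg.union h01).mono_set
    (Set.Icc_union_Icc_eq_Icc (by norm_num : (-1:ℝ) ≤ 0) zero_le_one).symm.subset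


lemma integrable_min_sq_div {s : ℝ} (hs0 : 0 < s) (hs1 : s < 1) :
    Integrable (fun t : ℝ => min (t ^ 2) 1 / |t| ^ (1 + 2 * s)) := by
  have hmeas : Measurable fun t : ℝ => min (t ^ 2) 1 / |t| ^ (1 + 2 * s) :=
    ((measurable_id.pow_const 2).min measurable_const).div
      (measurable_id.abs.pow measurable_const)
  have hIoi : IntegrableOn (fun t : ℝ => min (t ^ 2) 1 / |t| ^ (1 + 2 * s)) (Set.Ioi 1) := by
    apply Integrable.mono'
      (integrableOn_Ioi_rpow_of_lt (show -(1+2*s) < -1 by linarith) one_pos)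
    · exact hmeas.aestronglyMeasurable.restrict
    · filter_upwards [ae_restrict_mem measurableSet_Ioi] with t ht
      have ht0 : (0:ℝ) < t := lt_trans one_pos ht
      rw [Real.norm_eq_abs, abs_of_nonneg (by positivity), abs_of_pos ht0,
        Real.rpow_neg ht0.le, ← one_div]
      exact div_le_div₀ (zero_le_one) (min_le_right _ _) (Real.rpow_pos_of_pos ht0 _) le_rfl
  rw [← integrableOn_univ,
    show (Set.univ : Set ℝ) = Set.Icc (-1) 1 ∪ (Set.Iio (-1) ∪ Set.Ioi 1) by
      ext t
      simp only [Set.mem_univ, Set.mem_union, Set.mem_Icc, Set.mem_Iio, Set.mem_Ioi, true_iff]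
      by_cases h1 : t < -1
      · exact Or.inr (Or.inl h1)
      · by_cases h2 : 1 < t
        · exact Or.inr (Or.inr h2)
        · exact Or.inl ⟨by linarith, by linarith⟩]
  apply IntegrableOn.union
  · apply Integrable.mono' (integrableOn_abs_rpow_Icc (r := 1 - 2*s) (by linarith))
    · exact hmeas.aestronglyMeasurable.restrict
    · filter_upwards [ae_restrict_mem measurableSet_Icc] with t _
      rw [Real.norm_eq_abs, abs_of_nonneg (by positivity)]
      rcases eq_or_ne t 0 with h0 | h0
      · simp only [h0, abs_zero]
        rw [Real.zero_rpow (by positivity : (1:ℝ)+2*s ≠ 0)]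
        simp only [div_zero]
        positivity
      · have habs : 0 < |t| := abs_pos.mpr h0
        calc min (t^2) 1 / |t| ^ (1+2*s) ≤ t^2 / |t| ^ (1+2*s) :=
              div_le_div₀ (sq_nonneg t) (min_le_left _ _) (Real.rpow_pos_of_pos habs _) le_rfl
          _ = |t| ^ (1 - 2*s) := by
              rw [← sq_abs, ← Real.rpow_natCast |t| 2, ← Real.rpow_sub habs]
              norm_num
              ring_nf
  · apply IntegrableOn.union
    · have key := (Measure.measurePreserving_neg (volume : Measure ℝ)).integrableOn_comp_preimage
        (Homeomorph.neg ℝ).measurableEmbedding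
        (f := fun t : ℝ => min (t ^ 2) 1 / |t| ^ (1 + 2 * s)) (s := Set.Iio (-1:ℝ))
      apply key.mp
      have hc : ((fun t : ℝ => min (t ^ 2) 1 / |t| ^ (1 + 2 * s)) ∘ Neg.neg)
          = fun t : ℝ => min (t ^ 2) 1 / |t| ^ (1 + 2 * s) := by
        funext t; simp [Function.comp, abs_neg, neg_sq]
      have hp : (Neg.neg ⁻¹' Set.Iio (-1:ℝ) : Set ℝ) = Set.Ioi 1 := by
        ext t
        simp only [Set.mem_preimage, Set.mem_Iio, Set.mem_Ioi]
        constructor <;> intro h <;> linarith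
      rw [hc, hp]
      exact hIoi
    · exact hIoi

set_option maxHeartbeats 1000000 in
/-- For `s ∈ (0,1)` and `v ∈ W^{1,∞}(ℝ²)` (bounded Lipschitz)
supported in the open unit Euclidean ball, there is `C > 0` (depending only on `s`
and the `W^{1,∞}` data) with
`|D_y^s v(x,y)| ≤ C min{1, (x²+y²)^{-(1+2s)/4}}` for all `(x,y) ∈ ℝ²`;
the right-hand side is written as `C / max 1 ((x²+y²)^{(1+2s)/4})`. -/
theorem fracGrad_decay_of_compact_support
    (s : ℝ) (hs : s ∈ Set.Ioo (0 : ℝ) 1)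
    (v : ℝ × ℝ → ℝ)
    (K : NNReal) (hlip : LipschitzWith K v)
    (M : ℝ) (hbd : ∀ p : ℝ × ℝ, |v p| ≤ M)
    (hsupp : ∀ p : ℝ × ℝ, 1 ≤ p.1 ^ 2 + p.2 ^ 2 → v p = 0) :
    ∃ C : ℝ, 0 < C ∧ ∀ p : ℝ × ℝ,
      (fracGradSq s v p) ^ ((1 : ℝ) / 2)
        ≤ ENNReal.ofReal (C / max 1 ((p.1 ^ 2 + p.2 ^ 2) ^ ((1 + 2 * s) / 4))) := by
  obtain ⟨hs0, hs1⟩ := hs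
  have hM : 0 ≤ M := (abs_nonneg _).trans (hbd 0)
  set c₀ : ℝ := (∫ ζ : ℝ, (1 - Real.cos ζ) / |ζ| ^ (1 + 2 * s))⁻¹ / 2 with hc₀def
  set c₁ : ℝ := max c₀ 0 with hc₁def
  have hc₁ : 0 ≤ c₁ := le_max_right _ _
  have hcc : ENNReal.ofReal c₀ ≤ ENNReal.ofReal c₁ := ENNReal.ofReal_le_ofReal (le_max_left _ _)
  set B : ℝ := (K:ℝ)^2 + 4*M^2 with hBdef
  have hB : 0 ≤ B := by positivity
  have hker : Integrable (fun t : ℝ => B * (min (t ^ 2) 1 / |t| ^ (1 + 2 * s))) :=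
    (integrable_min_sq_div hs0 hs1).const_mul B
  set 𝔄 : ℝ≥0∞ := ∫⁻ t : ℝ, ENNReal.ofReal (B * (min (t ^ 2) 1 / |t| ^ (1 + 2 * s))) with h𝔄def
  have h𝔄 : 𝔄 < ⊤ := hker.lintegral_lt_top
  -- pointwise kernel bound
  have hpt : ∀ p : ℝ × ℝ, ∀ z : ℝ,
      ENNReal.ofReal ((v p - v (p.1, z)) ^ 2 / |p.2 - z| ^ (1 + 2 * s))
      ≤ ENNReal.ofReal (B * (min ((p.2 - z) ^ 2) 1 / |p.2 - z| ^ (1 + 2 * s))) := by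
    intro p z
    apply ENNReal.ofReal_le_ofReal
    rw [← mul_div_assoc]
    have hnum : (v p - v (p.1, z)) ^ 2 ≤ B * min ((p.2 - z) ^ 2) 1 := by
      rcases le_or_gt ((p.2 - z)^2) 1 with hsmall | hbig
      · rw [min_eq_left hsmall]
        have hd : dist (v p) (v (p.1, z)) ≤ K * dist p (p.1, z) := hlip.dist_le_mul _ _
        have hdist : dist p (p.1, z) = |p.2 - z| := by
          rw [Prod.dist_eq]
          simp only [dist_self, Real.dist_eq]
          exact max_eq_right (abs_nonneg _)
        rw [hdist, Real.dist_eq] at hd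
        have h2 : (v p - v (p.1, z))^2 ≤ ((K:ℝ) * |p.2 - z|)^2 := by
          rw [← sq_abs (v p - v (p.1,z))]
          exact pow_le_pow_left₀ (abs_nonneg _) hd 2
        calc (v p - v (p.1, z))^2 ≤ ((K:ℝ) * |p.2 - z|)^2 := h2
          _ = (K:ℝ)^2 * (p.2 - z)^2 := by rw [mul_pow, sq_abs]
          _ ≤ B * (p.2 - z)^2 := by nlinarith [sq_nonneg (p.2 - z), sq_nonneg M]
      · rw [min_eq_right hbig.le]
        have h1 := abs_le.mp (hbd p)
        have h2 := abs_le.mp (hbd (p.1, z))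
        nlinarith [NNReal.coe_nonneg K, sq_nonneg ((K:ℝ))]
    rw [div_eq_mul_inv, div_eq_mul_inv]
    exact mul_le_mul_of_nonneg_right hnum
      (inv_nonneg.mpr (Real.rpow_nonneg (abs_nonneg _) _))
  have hmeasK : Measurable fun t : ℝ =>
      ENNReal.ofReal (B * (min (t ^ 2) 1 / |t| ^ (1 + 2 * s))) :=
    ENNReal.measurable_ofReal.comp
      ((((measurable_id.pow_const 2).min measurable_const).div
        (measurable_id.abs.pow measurable_const)).const_mul B)
  have htrans : ∀ p : ℝ × ℝ,
      (∫⁻ z : ℝ, ENNReal.ofReal (B * (min ((p.2 - z) ^ 2) 1 / |p.2 - z| ^ (1 + 2 * s)))) = 𝔄 :=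
    fun p => (Measure.measurePreserving_sub_left volume p.2).lintegral_comp hmeasK
  have hglobal : ∀ p : ℝ × ℝ, fracGradSq s v p ≤ ENNReal.ofReal c₀ * 𝔄 := by
    intro p
    unfold fracGradSq
    rw [← hc₀def]
    apply mul_le_mul_right
    calc (∫⁻ z : ℝ, ENNReal.ofReal ((v p - v (p.1, z)) ^ 2 / |p.2 - z| ^ (1 + 2 * s)))
        ≤ ∫⁻ z : ℝ, ENNReal.ofReal (B * (min ((p.2 - z) ^ 2) 1 / |p.2 - z| ^ (1 + 2 * s))) :=
          lintegral_mono (hpt p)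
      _ = 𝔄 := htrans p
  set 𝔅 : ℝ≥0∞ := ENNReal.ofReal c₀ * 𝔄 with h𝔅def
  have h𝔅 : 𝔅 ≠ ⊤ := (ENNReal.mul_lt_top ENNReal.ofReal_lt_top h𝔄).ne
  set A : ℝ := (𝔅 ^ ((1:ℝ)/2)).toReal with hAdef
  have hA0 : 0 ≤ A := ENNReal.toReal_nonneg
  have hAeq : 𝔅 ^ ((1:ℝ)/2) = ENNReal.ofReal A := by
    rw [hAdef, ENNReal.ofReal_toReal (ENNReal.rpow_ne_top_of_nonneg (by norm_num) h𝔅)]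
  set D : ℝ := 48 * c₁ * M^2 with hDdef
  have hD0 : 0 ≤ D := by positivity
  set Cc : ℝ := max (8*A) (D ^ ((1:ℝ)/2)) + 1 with hCcdef
  have hCc0 : 0 ≤ max (8*A) (D ^ ((1:ℝ)/2)) :=
    le_trans (by positivity) (le_max_left (8*A) (D ^ ((1:ℝ)/2)))
  have hCcpos : 0 < Cc := by rw [hCcdef]; linarith
  refine ⟨Cc, hCcpos, ?_⟩
  intro p
  have hr2 : (0:ℝ) ≤ p.1^2 + p.2^2 := by positivity
  have hexp4 : (0:ℝ) ≤ (1 + 2*s)/4 := div_nonneg (by linarith) (by norm_num)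
  have hden1 : (1:ℝ) ≤ max 1 ((p.1^2+p.2^2) ^ ((1+2*s)/4)) := le_max_left _ _
  rcases le_or_gt (p.1^2 + p.2^2) 16 with hcase | hcase
  · -- near region
    have hden8 : max 1 ((p.1^2+p.2^2) ^ ((1+2*s)/4)) ≤ 8 := by
      apply max_le (by norm_num)
      calc (p.1^2+p.2^2) ^ ((1+2*s)/4) ≤ (16:ℝ) ^ ((1+2*s)/4) :=
            Real.rpow_le_rpow hr2 hcase hexp4
        _ ≤ (16:ℝ) ^ ((3:ℝ)/4) :=
            Real.rpow_le_rpow_of_exponent_le (by norm_num) (by linarith)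
        _ = 8 := by
            rw [show (16:ℝ) = 2^(4:ℕ) by norm_num, ← Real.rpow_natCast 2 4,
              ← Real.rpow_mul (by norm_num)]
            rw [show (4:ℕ) * ((3:ℝ)/4) = ((3:ℕ):ℝ) by push_cast; ring, Real.rpow_natCast]
            norm_num
    calc (fracGradSq s v p) ^ ((1:ℝ)/2)
        ≤ 𝔅 ^ ((1:ℝ)/2) := ENNReal.rpow_le_rpow (hglobal p) (by norm_num)
      _ = ENNReal.ofReal A := hAeq
      _ ≤ ENNReal.ofReal (Cc / max 1 ((p.1^2+p.2^2) ^ ((1+2*s)/4))) := by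
          apply ENNReal.ofReal_le_ofReal
          have h1 : A ≤ Cc / 8 := by
            rw [le_div_iff₀ (by norm_num : (0:ℝ) < 8)]
            have h8 : 8 * A ≤ max (8*A) (D ^ ((1:ℝ)/2)) := le_max_left _ _
            rw [hCcdef]; linarith
          have h2 : Cc / 8 ≤ Cc / max 1 ((p.1^2+p.2^2) ^ ((1+2*s)/4)) :=
            div_le_div_of_nonneg_left hCcpos.le (lt_of_lt_of_le one_pos hden1) hden8
          linarith
  · -- far region
    have h1le : (1:ℝ) ≤ p.1^2 + p.2^2 := by linarith
    have hvp : v p = 0 := hsupp p h1le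
    rcases le_or_gt 1 (p.1^2) with hx | hx
    · -- |x| ≥ 1 : integrand vanishes
      have hzero : ∀ z : ℝ, v (p.1, z) = 0 := fun z =>
        hsupp (p.1, z) (by nlinarith [sq_nonneg z])
      have hfz : fracGradSq s v p = 0 := by
        unfold fracGradSq
        have : ∀ z : ℝ,
            ENNReal.ofReal ((v p - v (p.1, z)) ^ 2 / |p.2 - z| ^ (1 + 2 * s)) = 0 := by
          intro z
          rw [hvp, hzero z]
          norm_num
        rw [lintegral_congr this]
        simp
      rw [hfz, ENNReal.zero_rpow_of_pos (by norm_num)]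
      exact zero_le
    · -- |x| < 1
      have hy2 : 15 < p.2^2 := by linarith
      have hy3 : 3 < |p.2| := by nlinarith [sq_abs p.2, abs_nonneg p.2]
      have hq0 : (0:ℝ) < |p.2| - 1 := by linarith
      have hqe : (0:ℝ) < (|p.2| - 1) ^ (1+2*s) := Real.rpow_pos_of_pos hq0 _
      have hptE : ∀ z : ℝ,
          ENNReal.ofReal ((v p - v (p.1, z)) ^ 2 / |p.2 - z| ^ (1 + 2 * s))
          ≤ (Set.Icc (-1:ℝ) 1).indicator
              (fun _ => ENNReal.ofReal (M^2 / (|p.2| - 1) ^ (1+2*s))) z := by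
        intro z
        by_cases hz : z ∈ Set.Icc (-1:ℝ) 1
        · rw [Set.indicator_of_mem hz]
          apply ENNReal.ofReal_le_ofReal
          have hz1 : |z| ≤ 1 := abs_le.mpr ⟨hz.1, hz.2⟩
          have hdist : |p.2| - 1 ≤ |p.2 - z| := by
            have := abs_sub_abs_le_abs_sub p.2 z
            linarith
          have hnum : (v p - v (p.1,z))^2 ≤ M^2 := by
            rw [hvp]
            have := abs_le.mp (hbd (p.1,z))
            nlinarith
          exact div_le_div₀ (by positivity) hnum hqe
            (Real.rpow_le_rpow hq0.le hdist (by linarith))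
        · have hz2 : 1 ≤ z^2 := by
            rw [Set.mem_Icc, not_and_or, not_le, not_le] at hz
            rcases hz with h | h
            · nlinarith
            · nlinarith
          have hvz : v (p.1, z) = 0 := hsupp (p.1, z) (by nlinarith [sq_nonneg p.1])
          rw [Set.indicator_of_notMem hz, hvp, hvz]
          norm_num
      have hint : (∫⁻ z : ℝ, ENNReal.ofReal ((v p - v (p.1, z)) ^ 2 / |p.2 - z| ^ (1 + 2 * s)))
          ≤ ENNReal.ofReal (M^2 / (|p.2| - 1) ^ (1+2*s)) * ENNReal.ofReal 2 := by
        calc _ ≤ ∫⁻ z : ℝ, (Set.Icc (-1:ℝ) 1).indicator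
                (fun _ => ENNReal.ofReal (M^2 / (|p.2| - 1) ^ (1+2*s))) z :=
              lintegral_mono hptE
          _ = ENNReal.ofReal (M^2 / (|p.2| - 1) ^ (1+2*s)) * volume (Set.Icc (-1:ℝ) 1) := by
              rw [lintegral_indicator measurableSet_Icc, setLIntegral_const]
          _ = _ := by rw [Real.volume_Icc]; norm_num
      have hr2pos : (0:ℝ) < p.1^2+p.2^2 := by linarith
      have hRpos : (0:ℝ) < (p.1^2+p.2^2) ^ ((1+2*s)/2) := Real.rpow_pos_of_pos hr2pos _
      have hcomp : (p.1^2+p.2^2) ^ ((1+2*s)/2) ≤ 24 * (|p.2| - 1) ^ (1+2*s) := by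
        have hr8 : p.1^2+p.2^2 ≤ 8 * (|p.2| - 1)^2 := by
          nlinarith [sq_abs p.2, sq_nonneg (|p.2| - 3)]
        calc (p.1^2+p.2^2) ^ ((1+2*s)/2) ≤ (8 * (|p.2| - 1)^2) ^ ((1+2*s)/2) :=
              Real.rpow_le_rpow hr2 hr8 (div_nonneg (by linarith) (by norm_num))
          _ = 8 ^ ((1+2*s)/2) * ((|p.2| - 1)^2) ^ ((1+2*s)/2) :=
              Real.mul_rpow (by norm_num) (by positivity)
          _ = 8 ^ ((1+2*s)/2) * (|p.2| - 1) ^ (1+2*s) := by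
              rw [← Real.rpow_natCast (|p.2| - 1) 2, ← Real.rpow_mul hq0.le]
              congr 1
              push_cast
              ring
          _ ≤ 24 * (|p.2| - 1) ^ (1+2*s) := by
              apply mul_le_mul_of_nonneg_right _ (Real.rpow_nonneg hq0.le _)
              calc (8:ℝ) ^ ((1+2*s)/2) ≤ (8:ℝ) ^ ((3:ℝ)/2) :=
                    Real.rpow_le_rpow_of_exponent_le (by norm_num) (by linarith)
                _ = 8 * 8 ^ ((1:ℝ)/2) := by
                    rw [show (3:ℝ)/2 = 1 + 1/2 by norm_num, Real.rpow_add (by norm_num),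
                      Real.rpow_one]
                _ ≤ 8 * 3 := by
                    have h89 : (8:ℝ) ^ ((1:ℝ)/2) ≤ (9:ℝ) ^ ((1:ℝ)/2) :=
                      Real.rpow_le_rpow (by norm_num) (by norm_num) (by norm_num)
                    have h9 : (9:ℝ) ^ ((1:ℝ)/2) = 3 := by
                      rw [show (9:ℝ) = 3^(2:ℕ) by norm_num, ← Real.rpow_natCast 3 2,
                        ← Real.rpow_mul (by norm_num)]
                      norm_num
                    linarith
                _ ≤ 24 := by norm_num
      have hfrac : fracGradSq s v p
          ≤ ENNReal.ofReal (D / (p.1^2+p.2^2) ^ ((1+2*s)/2)) := by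
        unfold fracGradSq
        rw [← hc₀def]
        calc ENNReal.ofReal c₀ *
              (∫⁻ z : ℝ, ENNReal.ofReal ((v p - v (p.1, z)) ^ 2 / |p.2 - z| ^ (1 + 2 * s)))
            ≤ ENNReal.ofReal c₁ *
              (ENNReal.ofReal (M^2 / (|p.2| - 1) ^ (1+2*s)) * ENNReal.ofReal 2) :=
              mul_le_mul' hcc hint
          _ = ENNReal.ofReal (c₁ * (M^2 / (|p.2| - 1) ^ (1+2*s)) * 2) := by
              rw [← ENNReal.ofReal_mul (by positivity), ← ENNReal.ofReal_mul (by positivity)]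
              ring_nf
          _ ≤ ENNReal.ofReal (D / (p.1^2+p.2^2) ^ ((1+2*s)/2)) := by
              apply ENNReal.ofReal_le_ofReal
              have heq : c₁ * (M^2 / (|p.2| - 1) ^ (1+2*s)) * 2
                  = (2*c₁*M^2) / (|p.2| - 1) ^ (1+2*s) := by ring
              rw [heq, hDdef, div_le_div_iff₀ hqe hRpos]
              nlinarith [mul_le_mul_of_nonneg_left hcomp
                (by positivity : (0:ℝ) ≤ 2*c₁*M^2)]
      have hmaxeq : max 1 ((p.1^2+p.2^2) ^ ((1+2*s)/4)) = (p.1^2+p.2^2) ^ ((1+2*s)/4) := by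
        apply max_eq_right
        calc (1:ℝ) = 1 ^ ((1+2*s)/4) := (Real.one_rpow _).symm
          _ ≤ (p.1^2+p.2^2) ^ ((1+2*s)/4) := Real.rpow_le_rpow zero_le_one h1le hexp4
      calc (fracGradSq s v p) ^ ((1:ℝ)/2)
          ≤ (ENNReal.ofReal (D / (p.1^2+p.2^2) ^ ((1+2*s)/2))) ^ ((1:ℝ)/2) :=
            ENNReal.rpow_le_rpow hfrac (by norm_num)
        _ = ENNReal.ofReal ((D / (p.1^2+p.2^2) ^ ((1+2*s)/2)) ^ ((1:ℝ)/2)) :=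
            ENNReal.ofReal_rpow_of_nonneg (by positivity) (by norm_num)
        _ = ENNReal.ofReal (D ^ ((1:ℝ)/2) / (p.1^2+p.2^2) ^ ((1+2*s)/4)) := by
            rw [Real.div_rpow hD0 (Real.rpow_nonneg hr2 _)]
            congr 1
            rw [← Real.rpow_mul hr2]
            congr 1
            ring
        _ ≤ ENNReal.ofReal (Cc / max 1 ((p.1^2+p.2^2) ^ ((1+2*s)/4))) := by
            rw [hmaxeq]
            apply ENNReal.ofReal_le_ofReal
            have hRpos4 : (0:ℝ) < (p.1^2+p.2^2) ^ ((1+2*s)/4) :=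
              Real.rpow_pos_of_pos hr2pos _
            have hDC : D ^ ((1:ℝ)/2) ≤ Cc := by
              rw [hCcdef]
              have := le_max_right (8*A) (D ^ ((1:ℝ)/2))
              linarith
            exact div_le_div₀ hCcpos.le hDC hRpos4 le_rfl
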